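/- Let c, D > 0, let δ > 0, and let G be a finite Borel measure on [0,∞) with G((δ,∞)) = 0 (bounded spectral support). Then for every t ≥ 0 and every γ ∈ [0,π], 2·∫_{[0,δ]} (1 − sinc(2μ·sin(γ/2)))·H̃(μ,t)²·G(dμ) ≤ (2δ²/3)·G([0,∞))·(1 − cos γ). (The left-hand side equals the mean-square error E|T_H(x,t) − T_H(x',t)|² of the spherical hyperbolic diffusion field at two points of S² at angular distance γ, so this error is of order 1 − cos γ as γ → 0⁺ even without any decay assumption on the angular power spectrum.) -/

import Mathlib

open MeasureTheory Real Set

/-- `H̃₁(μ,t)` for the subcritical regime `0 ≤ μ < c/(2D)`. -/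
noncomputable def Htilde1 (c D μ t : ℝ) : ℝ :=
  Real.exp (-(c ^ 2 * t) / (2 * D)) *
    (Real.cosh (c * t * Real.sqrt (c ^ 2 / (4 * D ^ 2) - μ ^ 2)) +
      c / (2 * D * Real.sqrt (c ^ 2 / (4 * D ^ 2) - μ ^ 2)) *
        Real.sinh (c * t * Real.sqrt (c ^ 2 / (4 * D ^ 2) - μ ^ 2)))

/-- `H̃₂(μ,t)` for the supercritical regime `μ > c/(2D)`. -/
noncomputable def Htilde2 (c D μ t : ℝ) : ℝ :=
  Real.exp (-(c ^ 2 * t) / (2 * D)) *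
    (Real.cos (c * t * Real.sqrt (μ ^ 2 - c ^ 2 / (4 * D ^ 2))) +
      c / (2 * D * Real.sqrt (μ ^ 2 - c ^ 2 / (4 * D ^ 2))) *
        Real.sin (c * t * Real.sqrt (μ ^ 2 - c ^ 2 / (4 * D ^ 2))))

/-- `H̃(μ,t)`, pieced together from `H̃₁`, the value at `μ = c/(2D)`, and `H̃₂`. -/
noncomputable def Htilde (c D μ t : ℝ) : ℝ :=
  if μ < c / (2 * D) then Htilde1 c D μ t
  else if μ = c / (2 * D) then Real.exp (-(c ^ 2 * t) / (2 * D)) * (1 + c ^ 2 * t / (2 * D))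
  else Htilde2 c D μ t

/-- `sinc x = sin x / x` for `x ≠ 0`, `sinc 0 = 1`. -/
noncomputable def sinc (x : ℝ) : ℝ := if x = 0 then 1 else Real.sin x / x

lemma sin_ge_sub_cube' (x : ℝ) (hx : 0 ≤ x) : x - x ^ 3 / 6 ≤ Real.sin x := by
  have hmono : Monotone (fun y : ℝ => Real.sin y - y + y ^ 3 / 6) := by
    apply monotone_of_hasDerivAt_nonneg (f' := fun y => Real.cos y - 1 + y ^ 2 / 2)
    · intro y
      have h1 : HasDerivAt Real.sin (Real.cos y) y := Real.hasDerivAt_sin y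
      have h2 : HasDerivAt (fun y : ℝ => y) 1 y := hasDerivAt_id y
      have h3 : HasDerivAt (fun y : ℝ => y ^ 3 / 6) ((3 : ℕ) * y ^ 2 / 6) y :=
        (hasDerivAt_pow 3 y).div_const 6
      have := (h1.sub h2).add h3
      refine this.congr_deriv ?_
      push_cast; ring
    · intro y
      have := Real.one_sub_sq_div_two_le_cos (x := y)
      simp only [Pi.zero_apply]
      linarith
  have := hmono hx
  simp only [Real.sin_zero] at this
  linarith [this]

lemma sinh_le_mul_cosh (x : ℝ) (hx : 0 ≤ x) : Real.sinh x ≤ x * Real.cosh x := by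
  have hmono : Monotone (fun y : ℝ => y * Real.cosh y - Real.sinh y) := by
    apply monotone_of_hasDerivAt_nonneg (f' := fun y => y * Real.sinh y)
    · intro y
      have h1 : HasDerivAt (fun y : ℝ => y * Real.cosh y) (1 * Real.cosh y + y * Real.sinh y) y :=
        (hasDerivAt_id y).mul (Real.hasDerivAt_cosh y)
      have := h1.sub (Real.hasDerivAt_sinh y)
      refine this.congr_deriv ?_; ring
    · intro y
      simp only [Pi.zero_apply]
      rcases le_total 0 y with h | h
      · exact mul_nonneg h (Real.sinh_nonneg_iff.2 h)
      · have := Real.sinh_nonpos_iff.2 h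
        nlinarith
  have := hmono hx
  simp only [Real.sinh_zero, Real.cosh_zero, zero_mul, sub_zero, mul_zero, sub_self] at this
  linarith [this]

lemma mul_sinh_le (x y : ℝ) (hx : 0 ≤ x) (hxy : x ≤ y) : y * Real.sinh x ≤ x * Real.sinh y := by
  have hmono : MonotoneOn (fun z : ℝ => x * Real.sinh z - z * Real.sinh x) (Set.Ici x) := by
    apply monotoneOn_of_hasDerivWithinAt_nonneg (convex_Ici x)
      (f' := fun z => x * Real.cosh z - Real.sinh x)
    · exact ((continuous_const.mul Real.continuous_sinh).sub
        (continuous_id.mul continuous_const)).continuousOn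
    · intro z hz
      have h1 : HasDerivAt (fun z : ℝ => x * Real.sinh z) (x * Real.cosh z) z := by
        simpa using (Real.hasDerivAt_sinh z).const_mul x
      have h2 : HasDerivAt (fun z : ℝ => z * Real.sinh x) (Real.sinh x) z := by
        simpa using (hasDerivAt_id z).mul_const (Real.sinh x)
      exact (h1.sub h2).hasDerivWithinAt
    · intro z hz
      rw [interior_Ici] at hz
      have hz' : x ≤ z := le_of_lt hz
      have h1 : Real.cosh x ≤ Real.cosh z := by
        rw [Real.cosh_le_cosh, abs_of_nonneg hx, abs_of_nonneg (hx.trans hz')]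
        exact hz'
      have h2 := sinh_le_mul_cosh x hx
      have h3 : x * Real.cosh x ≤ x * Real.cosh z := mul_le_mul_of_nonneg_left h1 hx
      linarith
  have := hmono (Set.self_mem_Ici) (Set.mem_Ici.2 hxy) hxy
  simp only at this
  linarith [this]

lemma sinc_le_one (x : ℝ) : _root_.sinc x ≤ 1 := by
  unfold _root_.sinc
  split_ifs with h
  · exact le_refl 1
  · have habs : |Real.sin x / x| ≤ 1 := by
      rw [abs_div]
      exact div_le_one_of_le₀ Real.abs_sin_le_abs (abs_nonneg x)
    exact (abs_le.1 habs).2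

lemma one_sub_sinc_le (x : ℝ) : 1 - _root_.sinc x ≤ x ^ 2 / 6 := by
  have key : ∀ y : ℝ, 0 < y → 1 - Real.sin y / y ≤ y ^ 2 / 6 := by
    intro y hy
    have h1 := sin_ge_sub_cube' y hy.le
    rw [sub_le_iff_le_add, ← sub_le_iff_le_add', le_div_iff₀ hy] at *
    nlinarith [h1]
  unfold _root_.sinc
  split_ifs with h
  · simp [h]
  · rcases lt_or_gt_of_ne h with hneg | hpos
    · have := key (-x) (by linarith)
      have heq : Real.sin (-x) / (-x) = Real.sin x / x := by
        rw [Real.sin_neg, neg_div_neg_eq]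
      rw [heq] at this
      have : 1 - Real.sin x / x ≤ (-x) ^ 2 / 6 := this
      nlinarith [this]
    · exact key x hpos

lemma abs_Htilde_le_one (c D : ℝ) (hc : 0 < c) (hD : 0 < D) {μ t : ℝ} (hμ : 0 ≤ μ)
    (ht : 0 ≤ t) : |Htilde c D μ t| ≤ 1 := by
  have hr : 0 < c / (2 * D) := by positivity
  have hexp1 : Real.exp (-(c ^ 2 * t) / (2 * D)) * (1 + c ^ 2 * t / (2 * D)) ≤ 1 := by
    have h1 : 1 + c ^ 2 * t / (2 * D) ≤ Real.exp (c ^ 2 * t / (2 * D)) := by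
      have := Real.add_one_le_exp (c ^ 2 * t / (2 * D))
      linarith
    calc Real.exp (-(c ^ 2 * t) / (2 * D)) * (1 + c ^ 2 * t / (2 * D))
        ≤ Real.exp (-(c ^ 2 * t) / (2 * D)) * Real.exp (c ^ 2 * t / (2 * D)) :=
          mul_le_mul_of_nonneg_left h1 (Real.exp_pos _).le
      _ = 1 := by rw [← Real.exp_add]; ring_nf; exact Real.exp_zero
  have hr2 : (c / (2 * D)) ^ 2 = c ^ 2 / (4 * D ^ 2) := by
    field_simp; ring
  unfold Htilde
  split_ifs with h1 h2
  · -- subcritical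
    unfold Htilde1
    have hpos : 0 < c ^ 2 / (4 * D ^ 2) - μ ^ 2 := by nlinarith [hr2, hμ, h1, hr]
    set s := Real.sqrt (c ^ 2 / (4 * D ^ 2) - μ ^ 2) with hs_def
    have hs : 0 < s := Real.sqrt_pos.2 hpos
    have hsr : s ≤ c / (2 * D) := by
      rw [hs_def]
      calc Real.sqrt (c ^ 2 / (4 * D ^ 2) - μ ^ 2) ≤ Real.sqrt ((c / (2 * D)) ^ 2) :=
            Real.sqrt_le_sqrt (by nlinarith [hr2, sq_nonneg μ])
        _ = c / (2 * D) := Real.sqrt_sq hr.le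
    have hu : (0 : ℝ) ≤ c * t * s := by positivity
    have hu' : (0 : ℝ) ≤ c * t * (c / (2 * D)) := by positivity
    have huv : c * t * s ≤ c * t * (c / (2 * D)) :=
      mul_le_mul_of_nonneg_left hsr (by positivity)
    have hcosh : Real.cosh (c * t * s) ≤ Real.cosh (c * t * (c / (2 * D))) := by
      rw [Real.cosh_le_cosh, abs_of_nonneg hu, abs_of_nonneg hu']
      exact huv
    have hsinh : c / (2 * D * s) * Real.sinh (c * t * s) ≤
        Real.sinh (c * t * (c / (2 * D))) := by
      have key := mul_sinh_le (c * t * s) (c * t * (c / (2 * D))) hu huv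
      rcases eq_or_lt_of_le ht with h0 | h0
      · simp [← h0]
      · have hct : 0 < c * t := by positivity
        have h2' : (c / (2 * D)) * Real.sinh (c * t * s) ≤ s * Real.sinh (c * t * (c / (2 * D))) := by
          have hkey' : (c * t) * ((c / (2 * D)) * Real.sinh (c * t * s)) ≤
              (c * t) * (s * Real.sinh (c * t * (c / (2 * D)))) := by
            nlinarith [key]
          exact le_of_mul_le_mul_left hkey' hct
        have hco : c / (2 * D * s) = (c / (2 * D)) / s := by
          rw [div_div]
        rw [hco, div_mul_eq_mul_div, div_le_iff₀ hs]
        nlinarith [h2']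
    have hsinh0 : 0 ≤ Real.sinh (c * t * s) := Real.sinh_nonneg_iff.2 hu
    have hk0 : (0 : ℝ) ≤ c / (2 * D * s) := by positivity
    have hinner0 : 0 ≤ Real.cosh (c * t * s) + c / (2 * D * s) * Real.sinh (c * t * s) := by
      have := Real.cosh_pos (c * t * s)
      nlinarith [mul_nonneg hk0 hsinh0]
    rw [abs_of_nonneg (mul_nonneg (Real.exp_pos _).le hinner0)]
    calc Real.exp (-(c ^ 2 * t) / (2 * D)) *
          (Real.cosh (c * t * s) + c / (2 * D * s) * Real.sinh (c * t * s))
        ≤ Real.exp (-(c ^ 2 * t) / (2 * D)) *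
          (Real.cosh (c * t * (c / (2 * D))) + Real.sinh (c * t * (c / (2 * D)))) := by
          apply mul_le_mul_of_nonneg_left _ (Real.exp_pos _).le
          linarith
      _ = Real.exp (-(c ^ 2 * t) / (2 * D)) * Real.exp (c * t * (c / (2 * D))) := by
          rw [Real.cosh_add_sinh]
      _ = 1 := by
          rw [← Real.exp_add]
          rw [show -(c ^ 2 * t) / (2 * D) + c * t * (c / (2 * D)) = 0 by field_simp; ring]
          exact Real.exp_zero
  · -- critical
    rw [abs_of_nonneg (by positivity)]
    exact hexp1
  · -- supercritical
    unfold Htilde2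
    push_neg at h1
    have hrμ : c / (2 * D) < μ := lt_of_le_of_ne h1 (Ne.symm h2)
    have hpos : 0 < μ ^ 2 - c ^ 2 / (4 * D ^ 2) := by nlinarith [hr2, hr]
    set s := Real.sqrt (μ ^ 2 - c ^ 2 / (4 * D ^ 2)) with hs_def
    have hs : 0 < s := Real.sqrt_pos.2 hpos
    have hu : (0 : ℝ) ≤ c * t * s := by positivity
    have hk0 : (0 : ℝ) ≤ c / (2 * D * s) := by positivity
    have hinner : |Real.cos (c * t * s) + c / (2 * D * s) * Real.sin (c * t * s)| ≤
        1 + c ^ 2 * t / (2 * D) := by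
      have hsin : |Real.sin (c * t * s)| ≤ c * t * s := by
        calc |Real.sin (c * t * s)| ≤ |c * t * s| := Real.abs_sin_le_abs
          _ = c * t * s := abs_of_nonneg hu
      have hcos : |Real.cos (c * t * s)| ≤ 1 := Real.abs_cos_le_one _
      have heq : c / (2 * D * s) * (c * t * s) = c ^ 2 * t / (2 * D) := by
        field_simp
      calc |Real.cos (c * t * s) + c / (2 * D * s) * Real.sin (c * t * s)|
          ≤ |Real.cos (c * t * s)| + |c / (2 * D * s) * Real.sin (c * t * s)| := abs_add_le _ _
        _ ≤ 1 + c / (2 * D * s) * (c * t * s) := by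
            rw [abs_mul, abs_of_nonneg hk0]
            have := mul_le_mul_of_nonneg_left hsin hk0
            linarith
        _ = 1 + c ^ 2 * t / (2 * D) := by rw [heq]
    rw [abs_mul, abs_of_nonneg (Real.exp_pos _).le]
    calc Real.exp (-(c ^ 2 * t) / (2 * D)) *
          |Real.cos (c * t * s) + c / (2 * D * s) * Real.sin (c * t * s)|
        ≤ Real.exp (-(c ^ 2 * t) / (2 * D)) * (1 + c ^ 2 * t / (2 * D)) :=
          mul_le_mul_of_nonneg_left hinner (Real.exp_pos _).le
      _ ≤ 1 := hexp1

/-- If the spectral measure `G` has bounded support `[0,δ]`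
(`G((δ,∞)) = 0`), then the mean-square error
`2 ∫_{[0,δ]} (1 − sinc(2μ sin(γ/2))) H̃(μ,t)² G(dμ)` of the spherical hyperbolic
diffusion field between points at angular distance `γ` is bounded by
`(2δ²/3)·G([0,∞))·(1 − cos γ)`. -/
theorem mse_bounded_support
    (c D δ : ℝ) (hc : 0 < c) (hD : 0 < D) (hδ : 0 < δ)
    (G : MeasureTheory.Measure ℝ) [MeasureTheory.IsFiniteMeasure G]
    (hG0 : G (Set.Iio 0) = 0) (hsupp : G (Set.Ioi δ) = 0) :
    ∀ t : ℝ, 0 ≤ t → ∀ γ : ℝ, γ ∈ Set.Icc 0 Real.pi →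
      2 * ∫ μ in Set.Icc (0 : ℝ) δ,
          (1 - _root_.sinc (2 * μ * Real.sin (γ / 2))) * Htilde c D μ t ^ 2 ∂G
        ≤ (2 * δ ^ 2 / 3) * (G (Set.Ici 0)).toReal * (1 - Real.cos γ) := by
  intro t ht γ hγ
  have hcos : Real.cos γ ≤ 1 := Real.cos_le_one γ
  set C := δ ^ 2 * (1 - Real.cos γ) / 3 with hC
  have hC0 : 0 ≤ C := by
    apply div_nonneg _ (by norm_num)
    exact mul_nonneg (sq_nonneg δ) (by linarith)
  have hbound : ∀ μ ∈ Set.Icc (0 : ℝ) δ,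
      ‖(1 - _root_.sinc (2 * μ * Real.sin (γ / 2))) * Htilde c D μ t ^ 2‖ ≤ C := by
    intro μ hμ
    obtain ⟨hμ0, hμδ⟩ := hμ
    set x := 2 * μ * Real.sin (γ / 2) with hx
    have h1 : 0 ≤ 1 - _root_.sinc x := by linarith [_root_.sinc_le_one x]
    have h2 : Htilde c D μ t ^ 2 ≤ 1 := by
      rw [← sq_abs]
      exact pow_le_one₀ (abs_nonneg _) (abs_Htilde_le_one c D hc hD hμ0 ht)
    have h2' : 0 ≤ Htilde c D μ t ^ 2 := sq_nonneg _
    have h3 : 1 - _root_.sinc x ≤ x ^ 2 / 6 := one_sub_sinc_le x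
    have hsin2 : Real.sin (γ / 2) ^ 2 = (1 - Real.cos γ) / 2 := by
      rw [← sq_abs, Real.abs_sin_half, Real.sq_sqrt (by linarith)]
    have hx2 : x ^ 2 = 4 * μ ^ 2 * ((1 - Real.cos γ) / 2) := by
      rw [show x ^ 2 = 4 * μ ^ 2 * Real.sin (γ / 2) ^ 2 by rw [hx]; ring, hsin2]
    rw [Real.norm_eq_abs, abs_mul, abs_of_nonneg h1, abs_of_nonneg h2']
    calc (1 - _root_.sinc x) * Htilde c D μ t ^ 2 ≤ (x ^ 2 / 6) * 1 := by
          apply mul_le_mul h3 h2 h2'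
          positivity
      _ ≤ C := by
          rw [hC, hx2]
          nlinarith [sq_nonneg μ, sq_nonneg δ, mul_le_mul_of_nonneg_right
            (mul_self_le_mul_self hμ0 hμδ) (show (0:ℝ) ≤ 1 - Real.cos γ by linarith)]
  have hfin : G (Set.Icc 0 δ) < ⊤ := measure_lt_top G _
  have key := norm_setIntegral_le_of_norm_le_const_ae' hfin
    (Filter.Eventually.of_forall hbound)
  have hstep : (∫ μ in Set.Icc (0 : ℝ) δ,
      (1 - _root_.sinc (2 * μ * Real.sin (γ / 2))) * Htilde c D μ t ^ 2 ∂G)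
      ≤ C * (G (Set.Icc 0 δ)).toReal := by
    refine le_trans (le_abs_self _) ?_
    rw [← Real.norm_eq_abs]
    exact key
  have hmono : (G (Set.Icc 0 δ)).toReal ≤ (G (Set.Ici 0)).toReal :=
    ENNReal.toReal_mono (measure_ne_top G _) (measure_mono Set.Icc_subset_Ici_self)
  have hfinal : (∫ μ in Set.Icc (0 : ℝ) δ,
      (1 - _root_.sinc (2 * μ * Real.sin (γ / 2))) * Htilde c D μ t ^ 2 ∂G)
      ≤ C * (G (Set.Ici 0)).toReal :=
    le_trans hstep (mul_le_mul_of_nonneg_left hmono hC0)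
  have htr : 0 ≤ (G (Set.Ici 0)).toReal := ENNReal.toReal_nonneg
  nlinarith [hfinal]
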